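/- Let ⋆ be the unique binary operation on {1,...,N} satisfying p ⋆ 1 = p + 1 mod N and p ⋆ (q ⋆ 1) = (p ⋆ q) ⋆ (p ⋆ 1). Then p ⋆ N = N for all p in {1,...,N}. -/
import Mathlib


def LaverAxioms (N : ℕ) (star : ℕ → ℕ → ℕ) : Prop :=
  (∀ p q, p ∈ Set.Icc 1 N → q ∈ Set.Icc 1 N → star p q ∈ Set.Icc 1 N) ∧
  (∀ p ∈ Set.Icc 1 N, star p 1 = p % N + 1) ∧
  (∀ p q, p ∈ Set.Icc 1 N → q ∈ Set.Icc 1 N →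
    star p (star q 1) = star (star p q) (star p 1))

/-- p ⋆ N = N for all p in {1,...,N}. -/
theorem laver_last_column (N : ℕ) (hN : 0 < N) (star : ℕ → ℕ → ℕ)
    (h : LaverAxioms N star) :
    ∀ p ∈ Set.Icc 1 N, star p N = N := by
  obtain ⟨hmem, h1, h3⟩ := h
  have mem : ∀ {a : ℕ}, 1 ≤ a → a ≤ N → a ∈ Set.Icc 1 N :=
    fun ha hb => Set.mem_Icc.mpr ⟨ha, hb⟩
  have hN1 : star N 1 = 1 := by
    have := h1 N (mem hN le_rfl)
    simpa [Nat.mod_self] using this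
  have hp1 : ∀ p, 1 ≤ p → p < N → star p 1 = p + 1 := by
    intro p hp hpN
    have := h1 p (mem hp hpN.le)
    rwa [Nat.mod_eq_of_lt hpN] at this
  -- row N is the identity
  have rowN : ∀ q, 1 ≤ q → q ≤ N → star N q = q := by
    intro q
    induction q with
    | zero => intro h1' h2'; omega
    | succ q ih =>
      intro _ hq
      rcases Nat.eq_zero_or_pos q with h0 | hq1
      · subst h0; exact hN1
      · have hqN : q < N := by omega
        have e1 : star q 1 = q + 1 := hp1 q hq1 hqN
        have e2 := h3 N q (mem hN le_rfl) (mem hq1 hqN.le)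
        rw [e1] at e2
        rw [e2, ih hq1 hqN.le, hN1, e1]
  -- all entries of row p exceed p, for p < N
  have C : ∀ d p, N - p ≤ d → 1 ≤ p → p < N → ∀ q, 1 ≤ q → q ≤ N → p < star p q := by
    intro d
    induction d with
    | zero => intro p hd hp hpN q hq1 hq2; omega
    | succ d ihd =>
      intro p hd hp hpN q
      induction q with
      | zero => intro h1' h2'; omega
      | succ q ihq =>
        intro _ hq
        rcases Nat.eq_zero_or_pos q with h0 | hq1
        · subst h0
          simp only [Nat.zero_add, hp1 p hp hpN]
          omega
        · have hqN : q < N := by omega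
          have e1 : star q 1 = q + 1 := hp1 q hq1 hqN
          have hrec : p < star p q := ihq hq1 hqN.le
          have hrmem := hmem p q (mem hp hpN.le) (mem hq1 hqN.le)
          rw [Set.mem_Icc] at hrmem
          set r := star p q with hr
          have e2 : star p (q + 1) = star r (star p 1) := by
            rw [← e1]; exact h3 p q (mem hp hpN.le) (mem hq1 hqN.le)
          rw [e2, hp1 p hp hpN]
          rcases eq_or_lt_of_le hrmem.2 with hrN | hrN
          · rw [hrN, rowN (p + 1) (by omega) (by omega)]; omega
          · have hlt : r < star r (p + 1) :=
              ihd r (by omega) (by omega) hrN (p + 1) (by omega) (by omega)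
            omega
  -- main argument
  intro p hp
  rw [Set.mem_Icc] at hp
  rcases eq_or_lt_of_le hp.2 with hpN | hpN
  · rw [hpN]; exact rowN N hN le_rfl
  · have key := h3 p N (mem hp.1 hp.2) (mem hN le_rfl)
    rw [hN1, hp1 p hp.1 hpN] at key
    -- key : p + 1 = star (star p N) (p + 1)
    set x := star p N with hx
    have hxmem := hmem p N (mem hp.1 hp.2) (mem hN le_rfl)
    rw [Set.mem_Icc] at hxmem
    by_contra hne
    have hxN : x < N := lt_of_le_of_ne hxmem.2 hne
    have h1x : p < x := C N p (by omega) hp.1 hpN N hN le_rfl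
    have h2x : x < star x (p + 1) :=
      C N x (by omega) (by omega) hxN (p + 1) (by omega) (by omega)
    rw [← key] at h2x
    omega
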